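/- There is no 4-way latin square of order 8 with exactly 44 fixed cells, i.e., 44 ∉ I⁴[8]. -/

import Mathlib

/-- A μ-way latin square of order n: μ latin squares on symbols `Fin n` such that
in every cell the μ entries are all equal or pairwise distinct. -/
def IsMuWayLatinSquare {μ n : ℕ} (L : Fin μ → Fin n → Fin n → Fin n) : Prop :=
  (∀ m i, Function.Injective (L m i)) ∧
  (∀ m j, Function.Injective (fun i => L m i j)) ∧
  (∀ i j, (∀ a b, L a i j = L b i j) ∨ Function.Injective (fun a => L a i j))

/-- A cell is fixed when the μ entries there coincide. -/
def IsFixedCell {μ n : ℕ} (L : Fin μ → Fin n → Fin n → Fin n) (i j : Fin n) : Prop :=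
  ∀ a b, L a i j = L b i j

instance {μ n : ℕ} (L : Fin μ → Fin n → Fin n → Fin n) (i j : Fin n) :
    Decidable (IsFixedCell L i j) :=
  inferInstanceAs (Decidable (∀ a b, L a i j = L b i j))

open Finset


lemma four_le_card (f : Fin 4 → Fin 8 → Fin 8) (hinj : ∀ a, Function.Injective (f a))
    (hcell : ∀ j, (∀ a b : Fin 4, f a j = f b j) ∨ Function.Injective fun a => f a j)
    (h : ∃ j, ¬ ∀ a b : Fin 4, f a j = f b j) :
    4 ≤ (Finset.univ.filter fun j => ¬ ∀ a b : Fin 4, f a j = f b j).card := by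
  classical
  obtain ⟨j0, hj0⟩ := h
  set Ti := Finset.univ.filter fun j => ¬ ∀ a b : Fin 4, f a j = f b j with hTi
  set Fi := Finset.univ.filter fun j => ∀ a b : Fin 4, f a j = f b j with hFi
  have hsurj : ∀ a, Function.Surjective (f a) := fun a =>
    Finite.injective_iff_surjective.mp (hinj a)
  have himage : ∀ a, Ti.image (f a) = Finset.univ \ Fi.image (f 0) := by
    intro a
    have hunion : Fi ∪ Ti = Finset.univ := Finset.filter_union_filter_not_eq _ _
    have himgU : Fi.image (f a) ∪ Ti.image (f a) = Finset.univ := by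
      rw [← Finset.image_union, hunion]
      exact Finset.image_univ_of_surjective (hsurj a)
    have hdisj : Disjoint (Fi.image (f a)) (Ti.image (f a)) := by
      rw [Finset.disjoint_image (hinj a)]
      exact Finset.disjoint_filter_filter_not _ _ _
    have hFeq : Fi.image (f a) = Fi.image (f 0) := Finset.image_congr (fun x hx => by
      simp only [hFi, Finset.coe_filter, Set.mem_setOf_eq] at hx
      exact hx.2 a 0)
    rw [← hFeq, ← himgU, Finset.union_sdiff_cancel_left hdisj]
  have hj0mem : j0 ∈ Ti := Finset.mem_filter.mpr ⟨Finset.mem_univ _, hj0⟩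
  have hsub : (Finset.univ.image fun a => f a j0) ⊆ Ti.image (f 0) := by
    intro x hx
    simp only [Finset.mem_image, Finset.mem_univ, true_and] at hx
    obtain ⟨a, rfl⟩ := hx
    rw [himage 0, ← himage a]
    exact Finset.mem_image_of_mem _ hj0mem
  calc 4 = (Finset.univ.image fun a => f a j0).card := by
        rw [Finset.card_image_of_injective _ ((hcell j0).resolve_left hj0)]
        simp
    _ ≤ (Ti.image (f 0)).card := Finset.card_le_card hsub
    _ = Ti.card := Finset.card_image_of_injective _ (hinj 0)
lemma sym_lemma (L : Fin 4 → Fin 8 → Fin 8 → Fin 8) (hL : IsMuWayLatinSquare L)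
    (T : Finset (Fin 8 × Fin 8))
    (hT : ∀ p : Fin 8 × Fin 8, p ∈ T ↔ ¬ ∀ a b : Fin 4, L a p.1 p.2 = L b p.1 p.2)
    (s : Fin 8) (h : (T.filter fun p => L 0 p.1 p.2 = s).Nonempty) :
    4 ≤ (T.filter fun p => L 0 p.1 p.2 = s).card := by
  classical
  obtain ⟨hrow, hcol, hcell⟩ := hL
  set P : Fin 4 → Finset (Fin 8 × Fin 8) := fun a => T.filter fun p => L a p.1 p.2 = s with hP
  have hmem : ∀ (a : Fin 4) (p : Fin 8 × Fin 8),
      p ∈ P a ↔ (¬ ∀ c d : Fin 4, L c p.1 p.2 = L d p.1 p.2) ∧ L a p.1 p.2 = s := by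
    intro a p
    simp only [hP, Finset.mem_filter, hT p]
  have hswapr : ∀ a b : Fin 4, ∀ p ∈ P a, ∃ j, (p.1, j) ∈ P b := by
    intro a b p hp
    obtain ⟨j, hj⟩ := Finite.injective_iff_surjective.mp (hrow b p.1) s
    have h1 := (hmem a p).mp hp
    refine ⟨j, (hmem b _).mpr ⟨?_, hj⟩⟩
    intro hfix
    have h2 : L a p.1 j = s := (hfix a b).trans hj
    have hje : j = p.2 := hrow a p.1 (h2.trans h1.2.symm)
    exact h1.1 (hje ▸ hfix)
  have hswapc : ∀ a b : Fin 4, ∀ p ∈ P a, ∃ i, (i, p.2) ∈ P b := by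
    intro a b p hp
    obtain ⟨i, hi⟩ := Finite.injective_iff_surjective.mp (hcol b p.2) s
    have h1 := (hmem a p).mp hp
    refine ⟨i, (hmem b _).mpr ⟨?_, hi⟩⟩
    intro hfix
    have h2 : L a i p.2 = s := (hfix a b).trans hi
    have hie : i = p.1 := hcol a p.2 (show L a i p.2 = L a p.1 p.2 from h2.trans h1.2.symm)
    exact h1.1 (hie ▸ hfix)
  have hfstinj : ∀ a : Fin 4, Set.InjOn Prod.fst ((P a : Finset (Fin 8 × Fin 8)) : Set (Fin 8 × Fin 8)) := by
    intro a p hp q hq hpq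
    have h1 := (hmem a p).mp (by simpa using hp)
    have h2 := (hmem a q).mp (by simpa using hq)
    have : p.2 = q.2 := hrow a p.1 (by rw [h1.2, hpq, h2.2])
    exact Prod.ext hpq this
  have hsndinj : ∀ a : Fin 4, Set.InjOn Prod.snd ((P a : Finset (Fin 8 × Fin 8)) : Set (Fin 8 × Fin 8)) := by
    intro a p hp q hq hpq
    have h1 := (hmem a p).mp (by simpa using hp)
    have h2 := (hmem a q).mp (by simpa using hq)
    have hq1 : p.1 = q.1 := by
      apply hcol a p.2
      show L a p.1 p.2 = L a q.1 p.2
      rw [h1.2, hpq, h2.2]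
    exact Prod.ext hq1 hpq
  have himgfst : ∀ a : Fin 4, (P a).image Prod.fst = (P 0).image Prod.fst := by
    intro a
    apply Finset.Subset.antisymm <;>
      · intro x hx
        obtain ⟨p, hp, rfl⟩ := Finset.mem_image.mp hx
        obtain ⟨j, hj⟩ := hswapr _ _ p hp
        exact Finset.mem_image.mpr ⟨(p.1, j), hj, rfl⟩
  have himgsnd : ∀ a : Fin 4, (P a).image Prod.snd = (P 0).image Prod.snd := by
    intro a
    apply Finset.Subset.antisymm <;>
      · intro x hx
        obtain ⟨p, hp, rfl⟩ := Finset.mem_image.mp hx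
        obtain ⟨i, hi⟩ := hswapc _ _ p hp
        exact Finset.mem_image.mpr ⟨(i, p.2), hi, rfl⟩
  have hcardP : ∀ a : Fin 4, (P a).card = ((P 0).image Prod.fst).card := fun a => by
    rw [← himgfst a, Finset.card_image_of_injOn (hfstinj a)]
  have hcardC : ((P 0).image Prod.fst).card = ((P 0).image Prod.snd).card := by
    rw [Finset.card_image_of_injOn (hfstinj 0), Finset.card_image_of_injOn (hsndinj 0)]
  have hsubP : ∀ a : Fin 4, P a ⊆ ((P 0).image Prod.fst) ×ˢ ((P 0).image Prod.snd) := by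
    intro a p hp
    rw [Finset.mem_product]
    constructor
    · rw [← himgfst a]; exact Finset.mem_image_of_mem _ hp
    · rw [← himgsnd a]; exact Finset.mem_image_of_mem _ hp
  have hdisj : ∀ a ∈ (Finset.univ : Finset (Fin 4)), ∀ b ∈ Finset.univ, a ≠ b →
      Disjoint (P a) (P b) := by
    intro a _ b _ hab
    rw [Finset.disjoint_left]
    intro p hpa hpb
    have h1 := (hmem a p).mp hpa
    have h2 := (hmem b p).mp hpb
    have hinj := (hcell p.1 p.2).resolve_left h1.1
    exact hab (hinj (h1.2.trans h2.2.symm))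
  have hbig : (Finset.univ.biUnion P).card ≤
      ((P 0).image Prod.fst).card * ((P 0).image Prod.snd).card := by
    calc (Finset.univ.biUnion P).card ≤ (((P 0).image Prod.fst) ×ˢ ((P 0).image Prod.snd)).card :=
          Finset.card_le_card (Finset.biUnion_subset.mpr fun a _ => hsubP a)
      _ = _ := Finset.card_product _ _
  have hsum : (Finset.univ.biUnion P).card = 4 * ((P 0).image Prod.fst).card := by
    rw [Finset.card_biUnion hdisj]
    simp [hcardP]
  have hpos : 1 ≤ ((P 0).image Prod.fst).card := by
    rw [← hcardP 0]
    exact Finset.card_pos.mpr h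
  have h4 : 4 ≤ ((P 0).image Prod.fst).card := by
    have h5 : 4 * ((P 0).image Prod.fst).card ≤
        ((P 0).image Prod.fst).card * ((P 0).image Prod.snd).card := hsum ▸ hbig
    rw [← hcardC] at h5
    nlinarith [hpos]
  calc 4 ≤ ((P 0).image Prod.fst).card := h4
    _ = (T.filter fun p => L 0 p.1 p.2 = s).card := (hcardP 0).symm
/-- The number of fixed cells. -/
def numFixed {μ n : ℕ} (L : Fin μ → Fin n → Fin n → Fin n) : ℕ :=
  (Finset.univ.filter fun p : Fin n × Fin n => IsFixedCell L p.1 p.2).card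

/-- The number of fixed cells in row `i`. -/
def rowFixed {μ n : ℕ} (L : Fin μ → Fin n → Fin n → Fin n) (i : Fin n) : ℕ :=
  (Finset.univ.filter fun j : Fin n => IsFixedCell L i j).card

/-- The intersection spectrum `I^μ[n]`. -/
def Spectrum (μ n : ℕ) : Set ℕ :=
  {k | ∃ L : Fin μ → Fin n → Fin n → Fin n, IsMuWayLatinSquare L ∧ numFixed L = k}


theorem stmt_16 : (44 : ℕ) ∉ Spectrum 4 8 := by
  rintro ⟨L, hL, hfix⟩
  classical
  have hLrow := hL.1
  have hLcol := hL.2.1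
  have hLcell := hL.2.2
  set T : Finset (Fin 8 × Fin 8) :=
    Finset.univ.filter (fun p : Fin 8 × Fin 8 => ¬ IsFixedCell L p.1 p.2) with hTdef
  have hTmem : ∀ p : Fin 8 × Fin 8, p ∈ T ↔ ¬ ∀ a b : Fin 4, L a p.1 p.2 = L b p.1 p.2 := by
    intro p
    simp only [hTdef, Finset.mem_filter, Finset.mem_univ, true_and, IsFixedCell]
    exact Finset.mem_filter.trans ⟨fun h => h.2, fun h => ⟨Finset.mem_univ _, h⟩⟩
  have hT20 : T.card = 20 := by
    have hh := Finset.card_filter_add_card_filter_not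
      (s := (Finset.univ : Finset (Fin 8 × Fin 8))) (p := fun p => IsFixedCell L p.1 p.2)
    have h44 : (Finset.univ.filter fun p : Fin 8 × Fin 8 => IsFixedCell L p.1 p.2).card = 44 :=
      hfix
    have h64 : (Finset.univ : Finset (Fin 8 × Fin 8)).card = 64 := by simp
    have hTT : T.card = (Finset.univ.filter fun p : Fin 8 × Fin 8 => ¬ IsFixedCell L p.1 p.2).card := rfl
    omega
  set rowT : Fin 8 → ℕ := fun i => (Finset.univ.filter fun j => ¬ IsFixedCell L i j).card with hrowT
  set colT : Fin 8 → ℕ := fun j => (Finset.univ.filter fun i => ¬ IsFixedCell L i j).card with hcolT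
  have hrow_fiber : ∀ i, (T.filter fun p => p.1 = i).card = rowT i := by
    intro i
    have himg : T.filter (fun p => p.1 = i)
        = (Finset.univ.filter fun j => ¬ IsFixedCell L i j).image (fun j => (i, j)) := by
      ext p
      simp only [hTdef, Finset.mem_filter, Finset.mem_univ, true_and, Finset.mem_image]
      constructor
      · rintro ⟨hp, h1⟩
        exact ⟨p.2, by rw [← h1]; exact hp, by rw [← h1]⟩
      · rintro ⟨j, hj, rfl⟩
        exact ⟨hj, rfl⟩
    rw [himg, Finset.card_image_of_injective _ (fun a b h => ((Prod.mk.injEq _ _ _ _).mp h).2)]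
  have hcol_fiber : ∀ j, (T.filter fun p => p.2 = j).card = colT j := by
    intro j
    have himg : T.filter (fun p => p.2 = j)
        = (Finset.univ.filter fun i => ¬ IsFixedCell L i j).image (fun i => (i, j)) := by
      ext p
      simp only [hTdef, Finset.mem_filter, Finset.mem_univ, true_and, Finset.mem_image]
      constructor
      · rintro ⟨hp, h1⟩
        exact ⟨p.1, by rw [← h1]; exact hp, by rw [← h1]⟩
      · rintro ⟨i, hi, rfl⟩
        exact ⟨hi, rfl⟩
    rw [himg, Finset.card_image_of_injective _ (fun a b h => ((Prod.mk.injEq _ _ _ _).mp h).1)]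
  have hsum_row : ∑ i : Fin 8, rowT i = 20 := by
    have hh := Finset.card_eq_sum_card_fiberwise
      (f := Prod.fst) (s := T) (t := Finset.univ) (fun p _ => Finset.mem_univ _)
    rw [hT20] at hh
    rw [← Finset.sum_congr rfl (fun i _ => hrow_fiber i), ← hh]
  have hsum_col : ∑ j : Fin 8, colT j = 20 := by
    have hh := Finset.card_eq_sum_card_fiberwise
      (f := Prod.snd) (s := T) (t := Finset.univ) (fun p _ => Finset.mem_univ _)
    rw [hT20] at hh
    rw [← Finset.sum_congr rfl (fun j _ => hcol_fiber j), ← hh]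
  set R := Finset.univ.filter (fun i => 0 < rowT i) with hRdef
  set Cc := Finset.univ.filter (fun j => 0 < colT j) with hCdef
  have hrow4 : ∀ i ∈ R, 4 ≤ rowT i := by
    intro i hi
    have hpos : 0 < rowT i := (Finset.mem_filter.mp hi).2
    have hne : ∃ j, ¬ ∀ a b : Fin 4, L a i j = L b i j := by
      obtain ⟨j, hj⟩ := Finset.card_pos.mp hpos
      exact ⟨j, (Finset.mem_filter.mp hj).2⟩
    exact four_le_card (fun a j => L a i j) (fun a => hLrow a i) (fun j => hLcell i j) hne
  have hcol4 : ∀ j ∈ Cc, 4 ≤ colT j := by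
    intro j hj
    have hpos : 0 < colT j := (Finset.mem_filter.mp hj).2
    have hne : ∃ i, ¬ ∀ a b : Fin 4, L a i j = L b i j := by
      obtain ⟨i, hi⟩ := Finset.card_pos.mp hpos
      exact ⟨i, (Finset.mem_filter.mp hi).2⟩
    exact four_le_card (fun a i => L a i j) (fun a => hLcol a j) (fun i => hLcell i j) hne
  have hRcard : R.card ≤ 5 := by
    have h1 : 4 * R.card ≤ ∑ i ∈ R, rowT i := by
      calc 4 * R.card = ∑ _i ∈ R, 4 := by rw [Finset.sum_const, smul_eq_mul, mul_comm]
        _ ≤ _ := Finset.sum_le_sum hrow4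
    have h2 : ∑ i ∈ R, rowT i ≤ 20 := by
      rw [← hsum_row]
      exact Finset.sum_le_sum_of_subset (Finset.subset_univ R)
    omega
  have hCcard : Cc.card ≤ 5 := by
    have h1 : 4 * Cc.card ≤ ∑ j ∈ Cc, colT j := by
      calc 4 * Cc.card = ∑ _j ∈ Cc, 4 := by rw [Finset.sum_const, smul_eq_mul, mul_comm]
        _ ≤ _ := Finset.sum_le_sum hcol4
    have h2 : ∑ j ∈ Cc, colT j ≤ 20 := by
      rw [← hsum_col]
      exact Finset.sum_le_sum_of_subset (Finset.subset_univ Cc)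
    omega
  have hTsub : T ⊆ R ×ˢ Cc := by
    intro p hp
    have hp' : ¬ IsFixedCell L p.1 p.2 := (Finset.mem_filter.mp hp).2
    rw [Finset.mem_product]
    constructor
    · refine Finset.mem_filter.mpr ⟨Finset.mem_univ _, Finset.card_pos.mpr ⟨p.2, ?_⟩⟩
      exact Finset.mem_filter.mpr ⟨Finset.mem_univ _, hp'⟩
    · refine Finset.mem_filter.mpr ⟨Finset.mem_univ _, Finset.card_pos.mpr ⟨p.1, ?_⟩⟩
      exact Finset.mem_filter.mpr ⟨Finset.mem_univ _, hp'⟩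
  have h20ab : 20 ≤ R.card * Cc.card := by
    rw [← hT20, ← Finset.card_product]
    exact Finset.card_le_card hTsub
  set U := Finset.univ.filter (fun s : Fin 8 => ∃ p ∈ T, L 0 p.1 p.2 = s) with hUdef
  have hsym_sum : ∑ s : Fin 8, (T.filter fun p => L 0 p.1 p.2 = s).card = 20 := by
    have hh := Finset.card_eq_sum_card_fiberwise
      (f := fun p : Fin 8 × Fin 8 => L 0 p.1 p.2) (s := T) (t := Finset.univ)
      (fun p _ => Finset.mem_univ _)
    rw [hT20] at hh
    exact hh.symm
  have hUcard : U.card ≤ 5 := by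
    have h1 : ∀ s ∈ U, 4 ≤ (T.filter fun p => L 0 p.1 p.2 = s).card := by
      intro s hs
      obtain ⟨p, hp, hps⟩ := (Finset.mem_filter.mp hs).2
      exact sym_lemma L hL T hTmem s ⟨p, Finset.mem_filter.mpr ⟨hp, hps⟩⟩
    have h2 : 4 * U.card ≤ ∑ s ∈ U, (T.filter fun p => L 0 p.1 p.2 = s).card := by
      calc 4 * U.card = ∑ _s ∈ U, 4 := by rw [Finset.sum_const, smul_eq_mul, mul_comm]
        _ ≤ _ := Finset.sum_le_sum h1
    have h3 : ∑ s ∈ U, (T.filter fun p => L 0 p.1 p.2 = s).card ≤ 20 := by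
      rw [← hsym_sum]
      exact Finset.sum_le_sum_of_subset (Finset.subset_univ U)
    omega
  have hUc3 : 3 ≤ (Finset.univ \ U).card := by
    rw [Finset.card_sdiff_of_subset (Finset.subset_univ U)]
    simp only [Finset.card_univ, Fintype.card_fin]
    omega
  have hbij : ∀ i : Fin 8, Function.Bijective (L 0 i) := fun i =>
    Finite.injective_iff_bijective.mp (hLrow 0 i)
  set c : Fin 8 → Fin 8 → Fin 8 := fun i f => (Equiv.ofBijective _ (hbij i)).symm f with hcdef
  have hc : ∀ i f, L 0 i (c i f) = f := fun i f =>
    (Equiv.ofBijective _ (hbij i)).apply_symm_apply f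
  have hTiC : ∀ i, (Finset.univ.filter fun j => ¬ IsFixedCell L i j)
      = (Cc.filter fun j => ¬ IsFixedCell L i j) := by
    intro i
    apply Finset.Subset.antisymm
    · intro j hj
      have hj' := (Finset.mem_filter.mp hj).2
      refine Finset.mem_filter.mpr ⟨?_, hj'⟩
      refine Finset.mem_filter.mpr ⟨Finset.mem_univ _, Finset.card_pos.mpr ⟨i, ?_⟩⟩
      exact Finset.mem_filter.mpr ⟨Finset.mem_univ _, hj'⟩
    · intro j hj
      exact Finset.mem_filter.mpr ⟨Finset.mem_univ _, (Finset.mem_filter.mp hj).2⟩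
  have hrowT_eq : ∀ i, (Cc.filter fun j => IsFixedCell L i j).card + rowT i = Cc.card := by
    intro i
    have h1 := Finset.card_filter_add_card_filter_not
      (s := Cc) (p := fun j => IsFixedCell L i j)
    rw [← hTiC i] at h1
    exact h1
  have hsumR : ∑ i ∈ R, rowT i = 20 := by
    rw [← hsum_row]
    apply Finset.sum_subset (Finset.subset_univ R)
    intro i _ hiR
    have h0 : ¬ 0 < rowT i := fun hp => hiR (Finset.mem_filter.mpr ⟨Finset.mem_univ _, hp⟩)
    omega
  have hinside : ∀ i ∈ R,
      ((Finset.univ \ U).filter fun f => ∃ j ∈ Cc, L 0 i j = f).card + rowT i ≤ Cc.card := by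
    intro i _
    have hsub2 : ((Finset.univ \ U).filter fun f => ∃ j ∈ Cc, L 0 i j = f)
        ⊆ (Cc.filter fun j => IsFixedCell L i j).image (L 0 i) := by
      intro f hf
      obtain ⟨hfU, j, hjC, hfj⟩ := Finset.mem_filter.mp hf
      have hfix2 : IsFixedCell L i j := by
        by_contra hnf
        have hfU2 : f ∈ U := Finset.mem_filter.mpr ⟨Finset.mem_univ _,
          ⟨(i, j), Finset.mem_filter.mpr ⟨Finset.mem_univ _, hnf⟩, hfj⟩⟩
        exact (Finset.mem_sdiff.mp hfU).2 hfU2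
      exact Finset.mem_image.mpr ⟨j, Finset.mem_filter.mpr ⟨hjC, hfix2⟩, hfj⟩
    have h1 := Finset.card_le_card hsub2
    have h2 : ((Cc.filter fun j => IsFixedCell L i j).image (L 0 i)).card
        = (Cc.filter fun j => IsFixedCell L i j).card :=
      Finset.card_image_of_injective _ (hLrow 0 i)
    have h3 := hrowT_eq i
    omega
  have houtside : ∀ f ∈ Finset.univ \ U,
      (R.filter fun i => ¬ ∃ j ∈ Cc, L 0 i j = f).card ≤ 8 - Cc.card := by
    intro f _
    have hcard := Finset.card_le_card_of_injOn (f := fun i => c i f)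
      (s := R.filter fun i => ¬ ∃ j ∈ Cc, L 0 i j = f) (t := Finset.univ \ Cc)
      (by
        intro i hi
        have hni := (Finset.mem_filter.mp hi).2
        exact Finset.mem_sdiff.mpr ⟨Finset.mem_univ _, fun hmemC => hni ⟨c i f, hmemC, hc i f⟩⟩)
      (by
        intro i _ i' _ hii
        have hii' : c i f = c i' f := hii
        apply hLcol 0 (c i f)
        show L 0 i (c i f) = L 0 i' (c i f)
        rw [hc i f, hii', hc i' f])
    have hsd : (Finset.univ \ Cc).card = 8 - Cc.card := by
      rw [Finset.card_sdiff_of_subset (Finset.subset_univ Cc)]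
      simp only [Finset.card_univ, Fintype.card_fin]
    omega
  have hsplit : ∀ i : Fin 8,
      ((Finset.univ \ U).filter fun f => ∃ j ∈ Cc, L 0 i j = f).card
      + ((Finset.univ \ U).filter fun f => ¬ ∃ j ∈ Cc, L 0 i j = f).card
      = (Finset.univ \ U).card := fun i =>
    Finset.card_filter_add_card_filter_not _
  have hswap : ∑ i ∈ R, ((Finset.univ \ U).filter fun f => ¬ ∃ j ∈ Cc, L 0 i j = f).card
      = ∑ f ∈ Finset.univ \ U, (R.filter fun i => ¬ ∃ j ∈ Cc, L 0 i j = f).card := by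
    simp only [Finset.card_filter]
    rw [Finset.sum_comm]
  -- set up arithmetic
  have hXY : (∑ i ∈ R, ((Finset.univ \ U).filter fun f => ∃ j ∈ Cc, L 0 i j = f).card)
      + (∑ i ∈ R, ((Finset.univ \ U).filter fun f => ¬ ∃ j ∈ Cc, L 0 i j = f).card)
      = (Finset.univ \ U).card * R.card := by
    rw [← Finset.sum_add_distrib]
    rw [Finset.sum_congr rfl (fun i _ => hsplit i)]
    rw [Finset.sum_const, smul_eq_mul, mul_comm]
  have hXb : (∑ i ∈ R, ((Finset.univ \ U).filter fun f => ∃ j ∈ Cc, L 0 i j = f).card) + 20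
      ≤ R.card * Cc.card := by
    have h1 : ∑ i ∈ R, (((Finset.univ \ U).filter fun f => ∃ j ∈ Cc, L 0 i j = f).card + rowT i)
        ≤ ∑ _i ∈ R, Cc.card := Finset.sum_le_sum hinside
    rw [Finset.sum_add_distrib, hsumR, Finset.sum_const, smul_eq_mul] at h1
    exact h1
  have hY : (∑ i ∈ R, ((Finset.univ \ U).filter fun f => ¬ ∃ j ∈ Cc, L 0 i j = f).card)
      ≤ (Finset.univ \ U).card * (8 - Cc.card) := by
    rw [hswap]
    calc ∑ f ∈ Finset.univ \ U, (R.filter fun i => ¬ ∃ j ∈ Cc, L 0 i j = f).card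
        ≤ ∑ _f ∈ Finset.univ \ U, (8 - Cc.card) := Finset.sum_le_sum houtside
      _ = (Finset.univ \ U).card * (8 - Cc.card) := by rw [Finset.sum_const, smul_eq_mul]
  -- final arithmetic
  set X := ∑ i ∈ R, ((Finset.univ \ U).filter fun f => ∃ j ∈ Cc, L 0 i j = f).card with hXdef
  set Y := ∑ i ∈ R, ((Finset.univ \ U).filter fun f => ¬ ∃ j ∈ Cc, L 0 i j = f).card with hYdef
  set u := (Finset.univ \ U).card with hudef
  set a := R.card with hadef
  set b := Cc.card with hbdef
  clear_value X Y u a b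
  clear hsplit hswap hinside houtside hsumR hrowT_eq hTiC hc hsym_sum hsum_row hsum_col
  interval_cases a <;> interval_cases b <;> omega
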